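/- For every p ∈ B: (i) exp_p(v) ∈ B for all v ∈ ℝ²; (ii) exp_p(log_p(x)) = x for all x ∈ B; and (iii) log_p(exp_p(v)) = v for all v ∈ ℝ². That is, the logarithmic and exponential maps at p are mutually inverse bijections between B and ℝ². -/

import Mathlib

noncomputable section

open Real MeasureTheory Set
open scoped InnerProductSpace ENNReal NNReal Classical

/-- Points of the plane `ℝ²`, with the Euclidean inner product and norm. -/
abbrev Pt : Type := EuclideanSpace ℝ (Fin 2)

namespace HypFL

/-- Inverse hyperbolic tangent. -/
def artanh (x : ℝ) : ℝ := (1 / 2) * Real.log ((1 + x) / (1 - x))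

/-- The Poincaré disc `B = {x : k‖x‖² < 1}` of curvature `-k`. -/
def disc (k : ℝ) : Set Pt := {x : Pt | k * ‖x‖ ^ 2 < 1}

/-- Möbius addition on the Poincaré disc. -/
def mAdd (k : ℝ) (x y : Pt) : Pt :=
  (1 + 2 * k * ⟪x, y⟫_ℝ + k ^ 2 * ‖x‖ ^ 2 * ‖y‖ ^ 2)⁻¹ •
    ((1 + 2 * k * ⟪x, y⟫_ℝ + k * ‖y‖ ^ 2) • x + (1 - k * ‖x‖ ^ 2) • y)

/-- Hyperbolic distance on the Poincaré disc. -/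
def hdist (k : ℝ) (x y : Pt) : ℝ :=
  (2 / Real.sqrt k) * artanh (Real.sqrt k * ‖mAdd k (-x) y‖)

/-- Logarithmic map at `p`. -/
def logMap (k : ℝ) (p x : Pt) : Pt :=
  if x = p then 0
  else ((((1 - k * ‖p‖ ^ 2) / Real.sqrt k) * artanh (Real.sqrt k * ‖mAdd k (-p) x‖))
      / ‖mAdd k (-p) x‖) • mAdd k (-p) x

/-- Exponential map at `p`. -/
def expMap (k : ℝ) (p v : Pt) : Pt :=
  if v = 0 then p
  else mAdd k p ((Real.tanh (Real.sqrt k * ‖v‖ / (1 - k * ‖p‖ ^ 2)) / (Real.sqrt k * ‖v‖)) • v)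

/-- The geodesic segment `[x, y] = {exp_x (t • log_x y) : t ∈ [0,1]}`. -/
def geoSeg (k : ℝ) (x y : Pt) : Set Pt :=
  (fun t : ℝ => expMap k x (t • logMap k x y)) '' Set.Icc (0 : ℝ) 1

/-- A set is geodesically convex if it contains the geodesic segment between any two
of its points. -/
def GConvex (k : ℝ) (S : Set Pt) : Prop := ∀ x ∈ S, ∀ y ∈ S, geoSeg k x y ⊆ S

/-- The geodesic convex hull of `D`: the intersection of all geodesically convex subsets
of the Poincaré disc containing `D`. -/
def gconv (k : ℝ) (D : Set Pt) : Set Pt :=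
  ⋂₀ {S : Set Pt | S ⊆ disc k ∧ GConvex k S ∧ D ⊆ S}

/-- The set of extreme points of a (finite) set `D`: points `z ∈ D` with
`z ∉ gconv (D \ {z})`. -/
def extremePts (k : ℝ) (D : Set Pt) : Set Pt := {z ∈ D | z ∉ gconv k (D \ {z})}

/-- The `CCW` predicate of the Poincaré Graham scan. -/
def ccw (k : ℝ) (x t z : Pt) : ℝ :=
  (‖logMap k x t‖⁻¹ • logMap k x t) 0 * (‖logMap k x z‖⁻¹ • logMap k x z) 1 -
    (‖logMap k x t‖⁻¹ • logMap k x t) 1 * (‖logMap k x z‖⁻¹ • logMap k x z) 0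

/-- `s = 1/√k`. -/
def sOf (k : ℝ) : ℝ := 1 / Real.sqrt k

end HypFL

namespace HypFL

/- Auxiliary lemmas about `tanh` and `artanh`. -/

lemma tanh_eq_exp (x : ℝ) :
    Real.tanh x = (Real.exp (2*x) - 1) / (Real.exp (2*x) + 1) := by
  rw [Real.tanh_eq_sinh_div_cosh, Real.sinh_eq, Real.cosh_eq]
  have h1 : Real.exp x > 0 := Real.exp_pos x
  have h2 : Real.exp (-x) > 0 := Real.exp_pos _
  have h3 : Real.exp (2*x) = Real.exp x * Real.exp x := by
    rw [two_mul, Real.exp_add]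
  have h4 : Real.exp (-x) * Real.exp x = 1 := by
    rw [← Real.exp_add]; simp
  rw [h3]
  field_simp
  nlinarith [h4]

lemma tanh_lt_one (x : ℝ) : Real.tanh x < 1 := by
  rw [tanh_eq_exp]
  have h : (0:ℝ) < Real.exp (2*x) + 1 := by positivity
  rw [div_lt_one h]; linarith

lemma neg_one_lt_tanh (x : ℝ) : -1 < Real.tanh x := by
  rw [tanh_eq_exp]
  have h : (0:ℝ) < Real.exp (2*x) + 1 := by positivity
  rw [lt_div_iff₀ h]
  nlinarith [Real.exp_pos (2*x)]

lemma tanh_pos {x : ℝ} (hx : 0 < x) : 0 < Real.tanh x := by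
  rw [tanh_eq_exp]
  have h : (1:ℝ) < Real.exp (2*x) := by
    rw [show (1:ℝ) = Real.exp 0 by simp]
    exact Real.exp_lt_exp.mpr (by linarith)
  have hd : (0:ℝ) < Real.exp (2*x) + 1 := by positivity
  apply div_pos (by linarith) hd

lemma artanh_tanh (x : ℝ) : artanh (Real.tanh x) = x := by
  rw [tanh_eq_exp, artanh]
  have h : (0:ℝ) < Real.exp (2*x) + 1 := by positivity
  have key : (1 + (Real.exp (2*x) - 1) / (Real.exp (2*x) + 1)) /
      (1 - (Real.exp (2*x) - 1) / (Real.exp (2*x) + 1)) = Real.exp (2*x) := by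
    field_simp
    ring
  rw [key, Real.log_exp]; ring

lemma tanh_artanh {y : ℝ} (h1 : -1 < y) (h2 : y < 1) : Real.tanh (artanh y) = y := by
  have hy : (0:ℝ) < (1 + y) / (1 - y) := by
    apply div_pos <;> linarith
  have hexp : Real.exp (2 * artanh y) = (1 + y) / (1 - y) := by
    rw [artanh]
    rw [show 2 * (1/2 * Real.log ((1+y)/(1-y))) = Real.log ((1+y)/(1-y)) by ring]
    exact Real.exp_log hy
  rw [tanh_eq_exp, hexp]
  have h1y : (1:ℝ) - y ≠ 0 := by linarith
  field_simp
  ring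

lemma artanh_pos {y : ℝ} (h1 : 0 < y) (h2 : y < 1) : 0 < artanh y := by
  rw [artanh]
  have hgt : (1:ℝ) < (1 + y) / (1 - y) := by
    rw [lt_div_iff₀ (by linarith)]; linarith
  have := Real.log_pos hgt
  linarith

/- Auxiliary lemmas about Möbius addition. -/

lemma denom_pos {k : ℝ} (hk : 0 < k) {x y : Pt} (hx : x ∈ disc k) (hy : y ∈ disc k) :
    0 < 1 + 2 * k * ⟪x, y⟫_ℝ + k ^ 2 * ‖x‖ ^ 2 * ‖y‖ ^ 2 := by
  have hA : -(‖x‖ * ‖y‖) ≤ ⟪x, y⟫_ℝ := neg_le_of_abs_le (abs_real_inner_le_norm x y)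
  have h1 : k * ‖x‖ ^ 2 < 1 := hx
  have h2 : k * ‖y‖ ^ 2 < 1 := hy
  nlinarith [mul_pos (sub_pos.2 h1) (sub_pos.2 h2), mul_nonneg hk.le (sq_nonneg (‖x‖ - ‖y‖)),
    mul_nonneg hk.le (by linarith : (0:ℝ) ≤ ⟪x, y⟫_ℝ + ‖x‖ * ‖y‖)]

lemma norm_mAdd_sq {k : ℝ} (hk : 0 < k) {x y : Pt} (hx : x ∈ disc k) (hy : y ∈ disc k) :
    ‖mAdd k x y‖ ^ 2 =
      ((1 + 2 * k * ⟪x, y⟫_ℝ + k * ‖y‖ ^ 2) ^ 2 * ‖x‖ ^ 2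
        + 2 * (1 + 2 * k * ⟪x, y⟫_ℝ + k * ‖y‖ ^ 2) * (1 - k * ‖x‖ ^ 2) * ⟪x, y⟫_ℝ
        + (1 - k * ‖x‖ ^ 2) ^ 2 * ‖y‖ ^ 2)
      / (1 + 2 * k * ⟪x, y⟫_ℝ + k ^ 2 * ‖x‖ ^ 2 * ‖y‖ ^ 2) ^ 2 := by
  have hD := denom_pos hk hx hy
  have hxx : ⟪x, x⟫_ℝ = ‖x‖ ^ 2 := real_inner_self_eq_norm_sq x
  have hyy : ⟪y, y⟫_ℝ = ‖y‖ ^ 2 := real_inner_self_eq_norm_sq y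
  have hyx : ⟪y, x⟫_ℝ = ⟪x, y⟫_ℝ := real_inner_comm x y
  have key : ⟪mAdd k x y, mAdd k x y⟫_ℝ =
      ((1 + 2 * k * ⟪x, y⟫_ℝ + k * ‖y‖ ^ 2) ^ 2 * ‖x‖ ^ 2
        + 2 * (1 + 2 * k * ⟪x, y⟫_ℝ + k * ‖y‖ ^ 2) * (1 - k * ‖x‖ ^ 2) * ⟪x, y⟫_ℝ
        + (1 - k * ‖x‖ ^ 2) ^ 2 * ‖y‖ ^ 2)
      / (1 + 2 * k * ⟪x, y⟫_ℝ + k ^ 2 * ‖x‖ ^ 2 * ‖y‖ ^ 2) ^ 2 := by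
    rw [mAdd]
    simp only [real_inner_smul_left, real_inner_smul_right, inner_add_left, inner_add_right]
    rw [hxx, hyy, hyx]
    set A := ⟪x, y⟫_ℝ
    set P := ‖x‖ ^ 2
    set W := ‖y‖ ^ 2
    field_simp
    ring
  rw [← real_inner_self_eq_norm_sq (mAdd k x y), key]

lemma one_sub_norm_mAdd_sq {k : ℝ} (hk : 0 < k) {x y : Pt} (hx : x ∈ disc k) (hy : y ∈ disc k) :
    1 - k * ‖mAdd k x y‖ ^ 2 =
      (1 - k * ‖x‖ ^ 2) * (1 - k * ‖y‖ ^ 2)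
        / (1 + 2 * k * ⟪x, y⟫_ℝ + k ^ 2 * ‖x‖ ^ 2 * ‖y‖ ^ 2) := by
  have hD := denom_pos hk hx hy
  rw [norm_mAdd_sq hk hx hy]
  set A := ⟪x, y⟫_ℝ
  set P := ‖x‖ ^ 2
  set W := ‖y‖ ^ 2
  have hD' : 1 + k * 2 * A + k ^ 2 * W * P ≠ 0 := by nlinarith
  field_simp
  ring

lemma mAdd_mem_disc {k : ℝ} (hk : 0 < k) {x y : Pt} (hx : x ∈ disc k) (hy : y ∈ disc k) :
    mAdd k x y ∈ disc k := by
  have hD := denom_pos hk hx hy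
  have h1 : k * ‖x‖ ^ 2 < 1 := hx
  have h2 : k * ‖y‖ ^ 2 < 1 := hy
  have key := one_sub_norm_mAdd_sq hk hx hy
  have hpos : 0 < (1 - k * ‖x‖ ^ 2) * (1 - k * ‖y‖ ^ 2)
      / (1 + 2 * k * ⟪x, y⟫_ℝ + k ^ 2 * ‖x‖ ^ 2 * ‖y‖ ^ 2) :=
    div_pos (mul_pos (by linarith) (by linarith)) hD
  show k * ‖mAdd k x y‖ ^ 2 < 1
  linarith

lemma neg_mem_disc {k : ℝ} {p : Pt} (hp : p ∈ disc k) : -p ∈ disc k := by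
  show k * ‖-p‖ ^ 2 < 1
  rw [norm_neg]; exact hp

lemma mAdd_zero (k : ℝ) (x : Pt) : mAdd k x 0 = x := by
  simp [mAdd]

lemma mAdd_neg_self (k : ℝ) (p : Pt) : mAdd k (-p) p = 0 := by
  rw [mAdd]
  rw [inner_neg_left, real_inner_self_eq_norm_sq, norm_neg]
  set P := ‖p‖ ^ 2
  match_scalars
  ring

lemma mAdd_cancel {k : ℝ} (hk : 0 < k) {p w : Pt} (hp : p ∈ disc k) (hw : w ∈ disc k) :
    mAdd k (-p) (mAdd k p w) = w := by
  have hnp : -p ∈ disc k := neg_mem_disc hp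
  have hD := denom_pos hk hp hw
  have hu : mAdd k p w ∈ disc k := mAdd_mem_disc hk hp hw
  have hE := denom_pos hk hnp hu
  have hip : ⟪-p, mAdd k p w⟫_ℝ =
      -((1 + 2 * k * ⟪p, w⟫_ℝ + k ^ 2 * ‖p‖ ^ 2 * ‖w‖ ^ 2)⁻¹ *
        ((1 + 2 * k * ⟪p, w⟫_ℝ + k * ‖w‖ ^ 2) * ‖p‖ ^ 2 + (1 - k * ‖p‖ ^ 2) * ⟪p, w⟫_ℝ)) := by
    rw [mAdd, real_inner_smul_right, inner_add_right, real_inner_smul_right,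
      real_inner_smul_right, inner_neg_left, inner_neg_left, real_inner_self_eq_norm_sq]
    ring
  have hnu := norm_mAdd_sq hk hp hw
  rw [hip, hnu, norm_neg] at hE
  conv_lhs => rw [mAdd]
  rw [hip, hnu, norm_neg, inv_smul_eq_iff₀ hE.ne']
  conv_lhs => rw [show mAdd k p w =
    (1 + 2 * k * ⟪p, w⟫_ℝ + k ^ 2 * ‖p‖ ^ 2 * ‖w‖ ^ 2)⁻¹ •
      ((1 + 2 * k * ⟪p, w⟫_ℝ + k * ‖w‖ ^ 2) • p + (1 - k * ‖p‖ ^ 2) • w) from rfl]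
  set A := ⟪p, w⟫_ℝ with hA
  set P := ‖p‖ ^ 2 with hP
  set W := ‖w‖ ^ 2 with hW
  match_scalars
  · field_simp
    ring
  · have hD' : 1 + k * 2 * A + k ^ 2 * P * W ≠ 0 := by nlinarith
    field_simp
    ring

lemma mAdd_cancel' {k : ℝ} (hk : 0 < k) {p x : Pt} (hp : p ∈ disc k) (hx : x ∈ disc k) :
    mAdd k p (mAdd k (-p) x) = x := by
  have := mAdd_cancel hk (neg_mem_disc hp) hx
  rwa [neg_neg] at this

/-- For every `p ∈ B`: (i) `exp_p v ∈ B` for all `v`;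
(ii) `exp_p (log_p x) = x` for all `x ∈ B`; (iii) `log_p (exp_p v) = v` for all `v`.
The logarithmic and exponential maps at `p` are mutually inverse bijections between
`B` and `ℝ²`. -/
theorem log_exp_inverse (k : ℝ) (hk : 0 < k) (p : Pt) (hp : p ∈ disc k) :
    (∀ v : Pt, expMap k p v ∈ disc k) ∧
    (∀ x ∈ disc k, expMap k p (logMap k p x) = x) ∧
    (∀ v : Pt, logMap k p (expMap k p v) = v) := by
  have hs : 0 < Real.sqrt k := Real.sqrt_pos.mpr hk
  have hs2 : Real.sqrt k ^ 2 = k := Real.sq_sqrt hk.le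
  have hP : k * ‖p‖ ^ 2 < 1 := hp
  have h1P : 0 < 1 - k * ‖p‖ ^ 2 := by linarith
  -- for v ≠ 0, the argument of `mAdd` in `expMap` lies in the disc
  have key_w : ∀ v : Pt, v ≠ 0 →
      (Real.tanh (Real.sqrt k * ‖v‖ / (1 - k * ‖p‖ ^ 2)) / (Real.sqrt k * ‖v‖)) • v
        ∈ disc k := by
    intro v hv
    have hnv : 0 < ‖v‖ := norm_pos_iff.mpr hv
    set t := Real.sqrt k * ‖v‖ / (1 - k * ‖p‖ ^ 2) with ht
    show k * ‖(Real.tanh t / (Real.sqrt k * ‖v‖)) • v‖ ^ 2 < 1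
    rw [norm_smul, Real.norm_eq_abs, mul_pow, sq_abs, div_pow, mul_pow, hs2]
    have hval : k * (Real.tanh t ^ 2 / (k * ‖v‖ ^ 2) * ‖v‖ ^ 2) = Real.tanh t ^ 2 := by
      field_simp
    rw [hval]
    nlinarith [tanh_lt_one t, neg_one_lt_tanh t]
  have exp_mem : ∀ v : Pt, expMap k p v ∈ disc k := by
    intro v
    by_cases hv : v = 0
    · rw [expMap, if_pos hv]; exact hp
    · rw [expMap, if_neg hv]
      exact mAdd_mem_disc hk hp (key_w v hv)
  refine ⟨exp_mem, ?_, ?_⟩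
  · -- exp ∘ log = id on the disc
    intro x hx
    by_cases hxp : x = p
    · rw [logMap, if_pos hxp, expMap, if_pos rfl, hxp]
    · set u := mAdd k (-p) x with hu
      have hud : u ∈ disc k := mAdd_mem_disc hk (neg_mem_disc hp) hx
      have hcan : mAdd k p u = x := mAdd_cancel' hk hp hx
      have hu0 : u ≠ 0 := by
        intro h
        apply hxp
        rw [← hcan, h, mAdd_zero]
      have hnu : 0 < ‖u‖ := norm_pos_iff.mpr hu0
      have hsu1 : Real.sqrt k * ‖u‖ < 1 := by
        have : k * ‖u‖ ^ 2 < 1 := hud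
        nlinarith
      have hsu0 : 0 < Real.sqrt k * ‖u‖ := mul_pos hs hnu
      set T := artanh (Real.sqrt k * ‖u‖) with hT
      have hTpos : 0 < T := artanh_pos hsu0 hsu1
      have htanhT : Real.tanh T = Real.sqrt k * ‖u‖ :=
        tanh_artanh (by linarith) hsu1
      set lam := ((1 - k * ‖p‖ ^ 2) / Real.sqrt k * T) / ‖u‖ with hlam
      have hlpos : 0 < lam := by
        apply div_pos _ hnu
        exact mul_pos (div_pos h1P hs) hTpos
      have hlog : logMap k p x = lam • u := by
        rw [logMap, if_neg hxp]
      rw [hlog]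
      have hv0 : lam • u ≠ 0 := smul_ne_zero hlpos.ne' hu0
      rw [expMap, if_neg hv0]
      have hnlam : ‖lam • u‖ = lam * ‖u‖ := by
        rw [norm_smul, Real.norm_eq_abs, abs_of_pos hlpos]
      have harg : Real.sqrt k * ‖lam • u‖ / (1 - k * ‖p‖ ^ 2) = T := by
        rw [hnlam, hlam]
        field_simp
      rw [harg, htanhT]
      have hscal : (Real.sqrt k * ‖u‖ / (Real.sqrt k * ‖lam • u‖)) • lam • u = u := by
        rw [hnlam, smul_smul]
        have : Real.sqrt k * ‖u‖ / (Real.sqrt k * (lam * ‖u‖)) * lam = 1 := by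
          field_simp
        rw [this, one_smul]
      rw [hscal, hcan]
  · -- log ∘ exp = id on ℝ²
    intro v
    by_cases hv : v = 0
    · rw [expMap, if_pos hv, logMap, if_pos rfl, hv]
    · have hnv : 0 < ‖v‖ := norm_pos_iff.mpr hv
      set t := Real.sqrt k * ‖v‖ / (1 - k * ‖p‖ ^ 2) with ht
      have htpos : 0 < t := div_pos (mul_pos hs hnv) h1P
      have htanh : 0 < Real.tanh t := tanh_pos htpos
      set c := Real.tanh t / (Real.sqrt k * ‖v‖) with hc
      have hcpos : 0 < c := div_pos htanh (mul_pos hs hnv)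
      set w := c • v with hw
      have hw0 : w ≠ 0 := smul_ne_zero hcpos.ne' hv
      have hwd : w ∈ disc k := key_w v hv
      have hexp : expMap k p v = mAdd k p w := by
        rw [expMap, if_neg hv]
      have hcan : mAdd k (-p) (mAdd k p w) = w := mAdd_cancel hk hp hwd
      have hxp : mAdd k p w ≠ p := by
        intro h
        apply hw0
        rw [← hcan, h, mAdd_neg_self]
      rw [hexp, logMap, if_neg hxp, hcan]
      have hnw : ‖w‖ = Real.tanh t / Real.sqrt k := by
        rw [hw, norm_smul, Real.norm_eq_abs, abs_of_pos hcpos, hc]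
        field_simp
      have hsw : Real.sqrt k * ‖w‖ = Real.tanh t := by
        rw [hnw]; field_simp
      rw [hsw, artanh_tanh]
      have hwv : ((1 - k * ‖p‖ ^ 2) / Real.sqrt k * t / ‖w‖) • w = v := by
        rw [hw, smul_smul]
        have : (1 - k * ‖p‖ ^ 2) / Real.sqrt k * t / ‖c • v‖ * c = 1 := by
          rw [norm_smul, Real.norm_eq_abs, abs_of_pos hcpos, hc, ht]
          have htne : Real.tanh (Real.sqrt k * ‖v‖ / (1 - k * ‖p‖ ^ 2)) ≠ 0 := htanh.ne'
          field_simp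
        rw [this, one_smul]
      exact hwv

end HypFL
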